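/- Let (M, μ) be a σ-finite measure space, n ≥ 1, and let 1 ≤ s < ∞. For all measurable functions u, v : M × ℝⁿ → [0, ∞) such that vol({y : u(x, y) > c}) < ∞ and vol({y : v(x, y) > c}) < ∞ for every x ∈ M and every c > 0, Steiner symmetrization is non-expansive: ∫ |u* − v*|^s d(μ ⊗ vol) ≤ ∫ |u − v|^s d(μ ⊗ vol) (both sides taken in [0, ∞]). -/

import Mathlib

open MeasureTheory Metric
open Set
open scoped RealInnerProductSpace ENNReal

noncomputable section

/-- Steiner symmetrization (with respect to `M`) of a subset of `M × ℝⁿ`: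
each slice over `x ∈ M` is replaced by the open ball centered at `0` with the same
Lebesgue measure as the slice `U_x`. -/
def steinerSet {M : Type*} {n : ℕ} (U : Set (M × EuclideanSpace ℝ (Fin n))) :
    Set (M × EuclideanSpace ℝ (Fin n)) :=
  {z | volume (ball (0 : EuclideanSpace ℝ (Fin n)) ‖z.2‖) < volume {y' | (z.1, y') ∈ U}}

/-- Steiner symmetrization (with respect to `M`) of a function `u : M × ℝⁿ → ℝ`:
`u*(x, y) = sup ({0} ∪ {c > 0 : vol (ball 0 ‖y‖) < vol {y' : u (x, y') > c}})`. -/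
def steiner {M : Type*} {n : ℕ} (u : M × EuclideanSpace ℝ (Fin n) → ℝ)
    (z : M × EuclideanSpace ℝ (Fin n)) : ℝ :=
  sSup ({0} ∪ {c : ℝ | 0 < c ∧
    volume (ball (0 : EuclideanSpace ℝ (Fin n)) ‖z.2‖) < volume {y' | c < u (z.1, y')}})

namespace SteinerAux

abbrev Ee (n : ℕ) := EuclideanSpace ℝ (Fin n)

variable {n : ℕ}

/-- distribution function of a slice -/
def dd (f : Ee n → ℝ) (c : ℝ) : ℝ≥0∞ := volume {y : Ee n | c < f y}

/-- slice Steiner symmetrization -/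
def sF (f : Ee n → ℝ) (y : Ee n) : ℝ :=
  sSup ({0} ∪ {c : ℝ | 0 < c ∧ volume (ball (0 : Ee n) ‖y‖) < dd f c})

theorem dd_antitone (f : Ee n → ℝ) : Antitone (dd f) := fun a b hab =>
  measure_mono (fun y hy => lt_of_le_of_lt hab hy)

theorem dd_right_cont (f : Ee n → ℝ) (c : ℝ) :
    dd f c = ⨆ k : ℕ, dd f (c + 1 / (k + 1)) := by
  have hU : {y : Ee n | c < f y} = ⋃ k : ℕ, {y : Ee n | c + 1 / (k + 1) < f y} := by
    ext y
    simp only [mem_setOf_eq, mem_iUnion]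
    constructor
    · intro h
      obtain ⟨k, hk⟩ := exists_nat_one_div_lt (show (0:ℝ) < f y - c by linarith)
      exact ⟨k, by linarith⟩
    · rintro ⟨k, hk⟩
      have : (0:ℝ) < 1 / (k + 1) := by positivity
      linarith
  have hd : Directed (· ⊆ ·) (fun k : ℕ => {y : Ee n | c + 1 / (k + 1) < f y}) := by
    intro i j
    refine ⟨max i j, fun y hy => ?_, fun y hy => ?_⟩ <;>
    · simp only [mem_setOf_eq] at hy ⊢
      have hi : ((i:ℝ)) ≤ ((max i j : ℕ) : ℝ) := Nat.cast_le.2 (le_max_left i j)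
      have hj : ((j:ℝ)) ≤ ((max i j : ℕ) : ℝ) := Nat.cast_le.2 (le_max_right i j)
      have h1 : 1 / ((max i j : ℕ) + 1 : ℝ) ≤ 1 / ((i:ℝ) + 1) :=
        one_div_le_one_div_of_le (by positivity) (by linarith)
      have h2 : 1 / ((max i j : ℕ) + 1 : ℝ) ≤ 1 / ((j:ℝ) + 1) :=
        one_div_le_one_div_of_le (by positivity) (by linarith)
      first | linarith | nlinarith
  rw [dd, hU, hd.measure_iUnion]
  rfl


theorem dd_small (f : Ee n → ℝ) (hf : Measurable f)
    (hfin : ∀ c : ℝ, 0 < c → dd f c < ⊤) {m : ℝ≥0∞} (hm : 0 < m) :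
    ∃ k : ℕ, dd f (k + 1) < m := by
  have hEmpty : (⋂ k : ℕ, {y : Ee n | (k:ℝ) + 1 < f y}) = ∅ := by
    ext y
    simp only [mem_iInter, mem_setOf_eq, mem_empty_iff_false, iff_false, not_forall, not_lt]
    obtain ⟨k, hk⟩ := exists_nat_gt (f y)
    exact ⟨k, by linarith⟩
  have hmeas : ∀ k : ℕ, NullMeasurableSet {y : Ee n | (k:ℝ) + 1 < f y} volume :=
    fun k => (measurableSet_lt measurable_const hf).nullMeasurableSet
  have hanti : Antitone (fun k : ℕ => {y : Ee n | (k:ℝ) + 1 < f y}) := by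
    intro i j hij y hy
    simp only [mem_setOf_eq] at hy ⊢
    have : (i:ℝ) ≤ (j:ℝ) := Nat.cast_le.2 hij
    linarith
  have htend := tendsto_measure_iInter_atTop hmeas hanti
    ⟨0, by simpa [dd] using (hfin 1 one_pos).ne⟩
  rw [hEmpty] at htend
  simp only [measure_empty] at htend
  have := htend.eventually_lt_const hm
  obtain ⟨k, hk⟩ := this.exists
  exact ⟨k, hk⟩

theorem bddAbove_aux (f : Ee n → ℝ) (hf : Measurable f)
    (hfin : ∀ c : ℝ, 0 < c → dd f c < ⊤) {m : ℝ≥0∞} (hm : 0 < m) :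
    BddAbove {c : ℝ | 0 < c ∧ m < dd f c} := by
  obtain ⟨k, hk⟩ := dd_small f hf hfin hm
  refine ⟨(k:ℝ) + 1, fun c hc => ?_⟩
  by_contra hlt
  push_neg at hlt
  have : dd f c ≤ dd f (k + 1) := dd_antitone f (le_of_lt hlt)
  exact absurd (lt_of_le_of_lt (le_of_lt hc.2) (lt_of_le_of_lt this hk)) (lt_irrefl m)

theorem sF_nonneg (f : Ee n → ℝ) (y : Ee n) : 0 ≤ sF f y := by
  apply Real.sSup_nonneg
  rintro x (rfl | hx)
  · rfl
  · exact le_of_lt hx.1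

theorem lt_sF_iff {f : Ee n → ℝ} (hf : Measurable f)
    (hfin : ∀ c : ℝ, 0 < c → dd f c < ⊤) {y : Ee n} (hy : y ≠ 0) {c : ℝ} (hc : 0 < c) :
    c < sF f y ↔ volume (ball (0 : Ee n) ‖y‖) < dd f c := by
  have hballpos : 0 < volume (ball (0 : Ee n) ‖y‖) :=
    measure_ball_pos _ _ (norm_pos_iff.2 hy)
  have hbdd : BddAbove ({0} ∪ {c : ℝ | 0 < c ∧ volume (ball (0 : Ee n) ‖y‖) < dd f c}) :=
    (bddAbove_singleton).union (bddAbove_aux f hf hfin hballpos)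
  constructor
  · intro h
    obtain ⟨b, hb, hcb⟩ := (lt_csSup_iff hbdd ⟨0, Or.inl rfl⟩).1 h
    rcases hb with rfl | hb
    · exact absurd hcb (not_lt.2 (le_of_lt hc))
    · exact lt_of_lt_of_le hb.2 (dd_antitone f (le_of_lt hcb))
  · intro h
    rw [dd_right_cont f c] at h
    obtain ⟨k, hk⟩ := lt_iSup_iff.1 h
    have hmem : c + 1 / ((k:ℝ) + 1) ∈
        ({0} ∪ {c : ℝ | 0 < c ∧ volume (ball (0 : Ee n) ‖y‖) < dd f c}) :=
      Or.inr ⟨by positivity, hk⟩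
    have : c < c + 1 / ((k:ℝ) + 1) := by
      have : (0:ℝ) < 1 / ((k:ℝ) + 1) := by positivity
      linarith
    exact lt_of_lt_of_le this (le_csSup hbdd hmem)


theorem set_lt_eq_ball (hn : 1 ≤ n) {m : ℝ≥0∞} (hm : m ≠ ⊤) :
    ∃ R : ℝ, 0 ≤ R ∧ {y : Ee n | volume (ball (0 : Ee n) ‖y‖) < m} = ball (0 : Ee n) R ∧
      volume (ball (0 : Ee n) R) = m := by
  haveI : Nonempty (Fin n) := ⟨⟨0, hn⟩⟩
  set κ := volume (ball (0 : Ee n) 1) with hκ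
  have hκpos : 0 < κ := measure_ball_pos _ _ one_pos
  have hκtop : κ ≠ ⊤ := measure_ball_lt_top.ne
  have hfr : Module.finrank ℝ (Ee n) = n := finrank_euclideanSpace_fin
  have hball : ∀ r : ℝ, 0 ≤ r →
      volume (ball (0 : Ee n) r) = ENNReal.ofReal (r ^ n) * κ := by
    intro r hr
    rw [Measure.addHaar_ball _ _ hr, hfr]
  have hdivtop : m / κ ≠ ⊤ := (ENNReal.div_lt_top hm hκpos.ne').ne
  set t : ℝ := (m / κ).toReal with ht
  have htnn : 0 ≤ t := ENNReal.toReal_nonneg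
  set R : ℝ := t ^ (1 / (n : ℝ)) with hR
  have hRnn : 0 ≤ R := Real.rpow_nonneg htnn _
  have hnR : (n:ℝ) ≠ 0 := by positivity
  have hRn : R ^ n = t := by
    rw [hR, ← Real.rpow_natCast (t ^ (1 / (n:ℝ))) n, ← Real.rpow_mul htnn]
    rw [one_div_mul_cancel hnR, Real.rpow_one]
  have key : ∀ y : Ee n, volume (ball (0 : Ee n) ‖y‖) < m ↔ ‖y‖ < R := by
    intro y
    rw [hball ‖y‖ (norm_nonneg y)]
    rw [← ENNReal.lt_div_iff_mul_lt (Or.inl hκpos.ne') (Or.inl hκtop)]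
    rw [ENNReal.ofReal_lt_iff_lt_toReal (by positivity) hdivtop, ← ht, ← hRn]
    exact pow_lt_pow_iff_left₀ (norm_nonneg y) hRnn (by omega)
  refine ⟨R, hRnn, ?_, ?_⟩
  · ext y
    simp only [mem_setOf_eq, mem_ball_zero_iff]
    exact key y
  · rw [hball R hRnn, hRn, ht, ENNReal.ofReal_toReal hdivtop,
      ENNReal.div_mul_cancel hκpos.ne' hκtop]

theorem vol_annulus (hn : 1 ≤ n) {m₁ m₂ : ℝ≥0∞} (h1 : m₁ ≠ ⊤) (h2 : m₂ ≠ ⊤) :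
    volume {y : Ee n | volume (ball (0 : Ee n) ‖y‖) < m₁ ∧
      ¬ volume (ball (0 : Ee n) ‖y‖) < m₂} = m₁ - m₂ := by
  obtain ⟨R₁, hR₁, hset₁, hvol₁⟩ := set_lt_eq_ball hn h1
  obtain ⟨R₂, hR₂, hset₂, hvol₂⟩ := set_lt_eq_ball hn h2
  have hseteq : {y : Ee n | volume (ball (0 : Ee n) ‖y‖) < m₁ ∧
      ¬ volume (ball (0 : Ee n) ‖y‖) < m₂} = ball (0 : Ee n) R₁ \ ball (0 : Ee n) R₂ := by
    ext y
    simp only [mem_setOf_eq, mem_diff, ← hset₁, ← hset₂, mem_setOf_eq]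
  rcases le_or_gt m₁ m₂ with hle | hlt
  · have : ball (0 : Ee n) R₁ ⊆ ball (0 : Ee n) R₂ := by
      rw [← hset₁, ← hset₂]
      exact fun y hy => lt_of_lt_of_le hy hle
    rw [hseteq, diff_eq_empty.2 this, measure_empty, eq_comm]
    exact tsub_eq_zero_of_le hle
  · have hsub : ball (0 : Ee n) R₂ ⊆ ball (0 : Ee n) R₁ := by
      rw [← hset₁, ← hset₂]
      exact fun y hy => lt_trans hy hlt
    rw [hseteq, measure_diff hsub measurableSet_ball.nullMeasurableSet (hvol₂ ▸ h2), hvol₁, hvol₂]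


theorem noatoms (hn : 1 ≤ n) : volume ({0} : Set (Ee n)) = 0 := by
  haveI : Nonempty (Fin n) := ⟨⟨0, hn⟩⟩
  haveI : Nontrivial (Ee n) := by
    refine ⟨0, EuclideanSpace.single ⟨0, hn⟩ (1:ℝ), fun h => ?_⟩
    have := congrFun (congrArg (fun f : Ee n => (f : Fin n → ℝ)) h) ⟨0, hn⟩
    simp [EuclideanSpace.single_apply] at this
  exact measure_singleton 0

theorem measurable_vb : Measurable (fun y : Ee n => volume (ball (0 : Ee n) ‖y‖)) := by
  rcases Nat.eq_zero_or_pos n with rfl | hn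
  · haveI : Subsingleton (Ee 0) := ⟨fun a b => by ext i; exact i.elim0⟩
    exact Subsingleton.measurable
  · haveI : Nonempty (Fin n) := ⟨⟨0, hn⟩⟩
    have : (fun y : Ee n => volume (ball (0 : Ee n) ‖y‖)) =
        fun y : Ee n => ENNReal.ofReal (‖y‖ ^ n) * volume (ball (0 : Ee n) 1) := by
      funext y
      rw [Measure.addHaar_ball _ _ (norm_nonneg y), finrank_euclideanSpace_fin]
    rw [this]
    exact ((measurable_norm.pow_const n).ennreal_ofReal).mul_const _

theorem measurable_sF (hn : 1 ≤ n) {f : Ee n → ℝ} (hf : Measurable f)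
    (hfin : ∀ c : ℝ, 0 < c → dd f c < ⊤) : Measurable (sF f) := by
  have hpos : ∀ c : ℝ, 0 < c → MeasurableSet {y : Ee n | c < sF f y} := by
    intro c hc
    classical
    have hset : {y : Ee n | c < sF f y} =
        ({y : Ee n | volume (ball (0 : Ee n) ‖y‖) < dd f c} \ {0}) ∪
          (if c < sF f (0 : Ee n) then ({0} : Set (Ee n)) else ∅) := by
      ext y
      by_cases hy : y = (0 : Ee n)
      · subst hy
        simp only [mem_union, mem_diff, mem_singleton_iff, not_true_eq_false, and_false,
          false_or, mem_setOf_eq]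
        by_cases h0 : c < sF f (0 : Ee n) <;> simp [h0]
      · simp only [mem_union, mem_diff, mem_singleton_iff, hy, not_false_eq_true, and_true,
          mem_setOf_eq, lt_sF_iff hf hfin hy hc]
        have : y ∉ (if c < sF f (0 : Ee n) then ({0} : Set (Ee n)) else ∅) := by
          by_cases h0 : c < sF f (0 : Ee n) <;> simp [h0, hy]
        tauto
    rw [hset]
    refine MeasurableSet.union ((measurable_vb (measurableSet_Iio)).diff
      (measurableSet_singleton 0)) ?_
    by_cases h0 : c < sF f (0 : Ee n) <;> simp [h0]
  apply measurable_of_Ioi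
  intro c
  rcases lt_or_ge c 0 with hc | hc
  · have : sF f ⁻¹' Ioi c = univ := by
      ext y
      simp only [mem_preimage, mem_Ioi, mem_univ, iff_true]
      exact lt_of_lt_of_le hc (sF_nonneg f y)
    rw [this]; exact MeasurableSet.univ
  · have : sF f ⁻¹' Ioi c = ⋃ q : {q : ℚ // c < (q:ℝ)}, {y : Ee n | ((q:ℚ):ℝ) < sF f y} := by
      ext y
      simp only [mem_preimage, mem_Ioi, mem_iUnion, mem_setOf_eq]
      constructor
      · intro h
        obtain ⟨q, hq1, hq2⟩ := exists_rat_btwn h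
        exact ⟨⟨q, hq1⟩, hq2⟩
      · rintro ⟨⟨q, hq⟩, h⟩
        exact lt_trans hq h
    rw [this]
    exact MeasurableSet.iUnion fun q => hpos _ (lt_of_le_of_lt hc q.2)

theorem vol_inter_le (hn : 1 ≤ n) {f g : Ee n → ℝ} (hf : Measurable f) (hg : Measurable g)
    (hffin : ∀ c : ℝ, 0 < c → dd f c < ⊤) (hgfin : ∀ c : ℝ, 0 < c → dd g c < ⊤)
    {σ τ : ℝ} (hσ : 0 < σ) (hτ : 0 < τ) :
    volume ({y : Ee n | σ < sF f y} ∩ {y : Ee n | sF g y ≤ τ}) ≤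
      volume ({y : Ee n | σ < f y} ∩ {y : Ee n | g y ≤ τ}) := by
  have hiff : ∀ y : Ee n, y ≠ 0 →
      ((y ∈ ({y : Ee n | σ < sF f y} ∩ {y : Ee n | sF g y ≤ τ})) ↔
        (y ∈ {y : Ee n | volume (ball (0 : Ee n) ‖y‖) < dd f σ ∧
          ¬ volume (ball (0 : Ee n) ‖y‖) < dd g τ})) := by
    intro y hy0
    simp only [mem_inter_iff, mem_setOf_eq]
    rw [lt_sF_iff hf hffin hy0 hσ, ← not_lt (a := τ) (b := sF g y),
      lt_sF_iff hg hgfin hy0 hτ]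
  have hae : ({y : Ee n | σ < sF f y} ∩ {y : Ee n | sF g y ≤ τ} : Set (Ee n)) =ᵐ[volume]
      ({y : Ee n | volume (ball (0 : Ee n) ‖y‖) < dd f σ ∧
        ¬ volume (ball (0 : Ee n) ‖y‖) < dd g τ} : Set (Ee n)) := by
    rw [MeasureTheory.ae_eq_set]
    constructor
    · refine measure_mono_null (fun y hy => ?_) (noatoms hn)
      rw [mem_diff] at hy
      by_contra hy0
      exact hy.2 ((hiff y hy0).1 hy.1)
    · refine measure_mono_null (fun y hy => ?_) (noatoms hn)
      rw [mem_diff] at hy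
      by_contra hy0
      exact hy.2 ((hiff y hy0).2 hy.1)
  rw [measure_congr hae, vol_annulus hn (hffin σ hσ).ne (hgfin τ hτ).ne]
  rw [tsub_le_iff_right]
  calc dd f σ = volume {y : Ee n | σ < f y} := rfl
    _ ≤ volume (({y : Ee n | σ < f y} ∩ {y : Ee n | g y ≤ τ}) ∪ {y : Ee n | τ < g y}) := by
        apply measure_mono
        intro y hy
        by_cases hgy : g y ≤ τ
        · exact Or.inl ⟨hy, hgy⟩
        · exact Or.inr (not_le.1 hgy)
    _ ≤ _ + dd g τ := measure_union_le _ _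


section Kernel

theorem lint_Ioo_left {p : ℝ} (hp : -1 < p) {D : ℝ} (hD : 0 ≤ D) {l r : ℝ} (hlr : l < r) :
    ∫⁻ x in Ioo l r, ENNReal.ofReal (D * (x - l) ^ p) =
      ENNReal.ofReal (D * (r - l) ^ (p + 1) / (p + 1)) := by
  have hp1 : (0:ℝ) < p + 1 := by linarith
  have hint : IntegrableOn (fun x => D * (x - l) ^ p) (Ioo l r) volume := by
    have i1 : IntervalIntegrable (fun x : ℝ => x ^ p) volume 0 (r - l) :=
      intervalIntegral.intervalIntegrable_rpow' hp
    have i2 := (i1.comp_sub_right l).const_mul D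
    rw [zero_add, sub_add_cancel] at i2
    exact (intervalIntegrable_iff_integrableOn_Ioc_of_le hlr.le).1 i2 |>.mono_set Ioo_subset_Ioc_self
  have hnn : 0 ≤ᵐ[volume.restrict (Ioo l r)] fun x => D * (x - l) ^ p := by
    filter_upwards [ae_restrict_mem measurableSet_Ioo] with x hx
    exact mul_nonneg hD (Real.rpow_nonneg (by linarith [hx.1]) _)
  rw [← ofReal_integral_eq_lintegral_ofReal hint hnn]
  congr 1
  rw [← integral_Ioc_eq_integral_Ioo, ← intervalIntegral.integral_of_le hlr.le]
  rw [intervalIntegral.integral_const_mul]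
  have := intervalIntegral.integral_comp_sub_right (a := l) (b := r) (fun x : ℝ => x ^ p) l
  rw [this, sub_self, integral_rpow (Or.inl hp)]
  rw [Real.zero_rpow hp1.ne', sub_zero, mul_div_assoc]

theorem lint_Ioo_right {p : ℝ} (hp : -1 < p) {D : ℝ} (hD : 0 ≤ D) {l r : ℝ} (hlr : l < r) :
    ∫⁻ x in Ioo l r, ENNReal.ofReal (D * (r - x) ^ p) =
      ENNReal.ofReal (D * (r - l) ^ (p + 1) / (p + 1)) := by
  have hp1 : (0:ℝ) < p + 1 := by linarith
  have hint : IntegrableOn (fun x => D * (r - x) ^ p) (Ioo l r) volume := by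
    have i1 : IntervalIntegrable (fun x : ℝ => x ^ p) volume 0 (r - l) :=
      intervalIntegral.intervalIntegrable_rpow' hp
    have i2 := (i1.comp_sub_left r).const_mul D
    rw [sub_zero, sub_sub_cancel] at i2
    exact (intervalIntegrable_iff_integrableOn_Ioc_of_le hlr.le).1 i2.symm
      |>.mono_set Ioo_subset_Ioc_self
  have hnn : 0 ≤ᵐ[volume.restrict (Ioo l r)] fun x => D * (r - x) ^ p := by
    filter_upwards [ae_restrict_mem measurableSet_Ioo] with x hx
    exact mul_nonneg hD (Real.rpow_nonneg (by linarith [hx.2]) _)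
  rw [← ofReal_integral_eq_lintegral_ofReal hint hnn]
  congr 1
  rw [← integral_Ioc_eq_integral_Ioo, ← intervalIntegral.integral_of_le hlr.le]
  rw [intervalIntegral.integral_const_mul]
  have := intervalIntegral.integral_comp_sub_left (a := l) (b := r) (fun x : ℝ => x ^ p) r
  rw [this, sub_self, integral_rpow (Or.inl hp)]
  rw [Real.zero_rpow hp1.ne', sub_zero, mul_div_assoc]


/-- kernel -/
def kk (s σ τ : ℝ) : ℝ≥0∞ :=
  if τ < σ then ENNReal.ofReal (s * (s - 1) * (σ - τ) ^ (s - 2)) else 0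

/-- middle function -/
def mid (s b σ : ℝ) : ℝ≥0∞ := if b < σ then ENNReal.ofReal (s * (σ - b) ^ (s - 1)) else 0

theorem restrict_Ico_aux {b σ : ℝ} (hb : 0 ≤ b) :
    (volume.restrict (Ioi (0:ℝ))).restrict (Ico b σ) = volume.restrict (Ioo b σ) := by
  rw [Measure.restrict_restrict measurableSet_Ico]
  apply Measure.restrict_congr_set
  rw [MeasureTheory.ae_eq_set]
  constructor
  · refine measure_mono_null (fun x hx => ?_) (measure_singleton (b:ℝ))
    simp only [mem_diff, mem_inter_iff, mem_Ico, mem_Ioi, mem_Ioo, not_and_or, not_lt,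
      mem_singleton_iff] at hx ⊢
    rcases hx.2 with h | h
    · linarith [hx.1.1.1, hx.1.1.2, hx.1.2]
    · linarith [hx.1.1.1, hx.1.1.2, hx.1.2]
  · refine measure_mono_null (fun x hx => ?_) (measure_empty (μ := volume) (α := ℝ))
    simp only [mem_diff, mem_inter_iff, mem_Ico, mem_Ioi, mem_Ioo, not_and_or, not_lt,
      mem_empty_iff_false] at hx ⊢
    rcases hx.2 with h | h
    · rcases h with h' | h' <;> linarith [hx.1.1, hx.1.2]
    · linarith [hx.1.1, hx.1.2]

theorem inner_int {s : ℝ} (hs : 1 < s) (σ : ℝ) {b : ℝ} (hb : 0 ≤ b) :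
    ∫⁻ τ in Ioi (0:ℝ), (if b ≤ τ then (1:ℝ≥0∞) else 0) * kk s σ τ = mid s b σ := by
  by_cases hbσ : b < σ
  · have hpt : ∀ τ, (if b ≤ τ then (1:ℝ≥0∞) else 0) * kk s σ τ =
        (Ico b σ).indicator (fun τ => ENNReal.ofReal (s * (s - 1) * (σ - τ) ^ (s - 2))) τ := by
      intro τ
      unfold kk
      by_cases h1 : b ≤ τ <;> by_cases h2 : τ < σ <;>
        simp [Set.indicator_apply, mem_Ico, h1, h2]
    rw [lintegral_congr hpt, lintegral_indicator measurableSet_Ico, restrict_Ico_aux hb,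
      lint_Ioo_right (by linarith) (by nlinarith) hbσ]
    have harith : s * (s - 1) * (σ - b) ^ (s - 2 + 1) / (s - 2 + 1) = s * (σ - b) ^ (s - 1) := by
      rw [show s - 2 + 1 = s - 1 by ring]
      have hne : s - 1 ≠ 0 := by linarith
      field_simp
    rw [harith, mid, if_pos hbσ]
  · have hpt : ∀ τ, (if b ≤ τ then (1:ℝ≥0∞) else 0) * kk s σ τ = 0 := by
      intro τ
      unfold kk
      by_cases h1 : b ≤ τ <;> by_cases h2 : τ < σ
      · exact absurd (lt_of_le_of_lt h1 h2) hbσ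
      all_goals simp [h1, h2]
    rw [lintegral_congr hpt, lintegral_zero, mid, if_neg hbσ]

theorem outer_int {s : ℝ} (hs : 1 ≤ s) (a : ℝ) {b : ℝ} (hb : 0 ≤ b) :
    ∫⁻ σ in Ioi (0:ℝ), (if σ < a then (1:ℝ≥0∞) else 0) * mid s b σ =
      ENNReal.ofReal (max (a - b) 0 ^ s) := by
  by_cases hba : b < a
  · have hpt : ∀ σ, (if σ < a then (1:ℝ≥0∞) else 0) * mid s b σ =
        (Ioo b a).indicator (fun σ => ENNReal.ofReal (s * (σ - b) ^ (s - 1))) σ := by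
      intro σ
      unfold mid
      by_cases h1 : σ < a <;> by_cases h2 : b < σ <;>
        simp [Set.indicator_apply, mem_Ioo, h1, h2]
    have hsub : Ioo b a ⊆ Ioi (0:ℝ) := fun x hx => lt_of_le_of_lt hb hx.1
    rw [lintegral_congr hpt, lintegral_indicator measurableSet_Ioo,
      Measure.restrict_restrict measurableSet_Ioo, inter_eq_left.2 hsub,
      lint_Ioo_left (by linarith) (by linarith) hba]
    have harith : s * (a - b) ^ (s - 1 + 1) / (s - 1 + 1) = (a - b) ^ s := by
      have hne : s ≠ 0 := by linarith
      rw [show s - 1 + 1 = s by ring, mul_div_cancel_left₀ _ hne]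
    rw [harith, max_eq_left (by linarith : (0:ℝ) ≤ a - b)]
  · have hpt : ∀ σ, (if σ < a then (1:ℝ≥0∞) else 0) * mid s b σ = 0 := by
      intro σ
      unfold mid
      by_cases h1 : σ < a <;> by_cases h2 : b < σ
      · exact absurd (lt_trans h2 h1) hba
      all_goals simp [h1, h2]
    rw [lintegral_congr hpt, lintegral_zero, max_eq_right (by linarith : a - b ≤ (0:ℝ)),
      Real.zero_rpow (by linarith : s ≠ 0), ENNReal.ofReal_zero]

theorem pt_one (a : ℝ) {b : ℝ} (hb : 0 ≤ b) :
    ∫⁻ σ in Ioi (0:ℝ), (if σ < a then (1:ℝ≥0∞) else 0) * (if b < σ then (1:ℝ≥0∞) else 0) =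
      ENNReal.ofReal (a - b) := by
  have hpt : ∀ σ, (if σ < a then (1:ℝ≥0∞) else 0) * (if b < σ then (1:ℝ≥0∞) else 0) =
      (Ioo b a).indicator (fun _ => (1:ℝ≥0∞)) σ := by
    intro σ
    by_cases h1 : σ < a <;> by_cases h2 : b < σ <;>
      simp [Set.indicator_apply, mem_Ioo, h1, h2]
  rw [lintegral_congr hpt, lintegral_indicator measurableSet_Ioo]
  rcases lt_or_ge b a with hba | hba
  · have hsub : Ioo b a ⊆ Ioi (0:ℝ) := fun x hx => lt_of_le_of_lt hb hx.1
    rw [Measure.restrict_restrict measurableSet_Ioo, inter_eq_left.2 hsub, setLIntegral_one,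
      Real.volume_Ioo]
  · rw [Ioo_eq_empty (not_lt.2 hba)]
    simp only [Measure.restrict_empty, lintegral_zero_measure]
    rw [eq_comm, ENNReal.ofReal_eq_zero]
    linarith

end Kernel


theorem ind_ne_top {P : Prop} [Decidable P] : (if P then (1:ℝ≥0∞) else 0) ≠ ⊤ := by
  split <;> simp

theorem rep_one {φ ψ : Ee n → ℝ} (hφ : Measurable φ) (hψ : Measurable ψ)
    (hψ0 : ∀ y, 0 ≤ ψ y) :
    ∫⁻ y, ENNReal.ofReal (φ y - ψ y) =
      ∫⁻ σ in Ioi (0:ℝ), volume ({y : Ee n | σ < φ y} ∩ {y : Ee n | ψ y < σ}) := by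
  have hpt : ∀ y, ENNReal.ofReal (φ y - ψ y) =
      ∫⁻ σ in Ioi (0:ℝ), (if σ < φ y then (1:ℝ≥0∞) else 0) *
        (if ψ y < σ then (1:ℝ≥0∞) else 0) :=
    fun y => (pt_one (φ y) (hψ0 y)).symm
  rw [lintegral_congr hpt]
  have hmeas : Measurable (Function.uncurry fun (y : Ee n) (σ : ℝ) =>
      (if σ < φ y then (1:ℝ≥0∞) else 0) * (if ψ y < σ then (1:ℝ≥0∞) else 0)) := by
    have m1 : MeasurableSet {p : Ee n × ℝ | p.2 < φ p.1} :=
      measurableSet_lt measurable_snd (hφ.comp measurable_fst)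
    have m2 : MeasurableSet {p : Ee n × ℝ | ψ p.1 < p.2} :=
      measurableSet_lt (hψ.comp measurable_fst) measurable_snd
    exact ((Measurable.ite m1 measurable_const measurable_const).mul
      (Measurable.ite m2 measurable_const measurable_const))
  rw [lintegral_lintegral_swap hmeas.aemeasurable]
  apply lintegral_congr
  intro σ
  have hpt2 : ∀ y : Ee n, (if σ < φ y then (1:ℝ≥0∞) else 0) *
      (if ψ y < σ then (1:ℝ≥0∞) else 0) =
      ({y : Ee n | σ < φ y} ∩ {y : Ee n | ψ y < σ}).indicator (fun _ => (1:ℝ≥0∞)) y := by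
    intro y
    by_cases h1 : σ < φ y <;> by_cases h2 : ψ y < σ <;>
      simp [Set.indicator_apply, h1, h2]
  rw [lintegral_congr hpt2, lintegral_indicator_const
    ((measurableSet_lt measurable_const hφ).inter (measurableSet_lt hψ measurable_const)), one_mul]

theorem rep_s {s : ℝ} (hs : 1 < s) {φ ψ : Ee n → ℝ} (hφ : Measurable φ) (hψ : Measurable ψ)
    (hψ0 : ∀ y, 0 ≤ ψ y) :
    ∫⁻ y, ENNReal.ofReal (max (φ y - ψ y) 0 ^ s) =
      ∫⁻ σ in Ioi (0:ℝ), ∫⁻ τ in Ioi (0:ℝ),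
        kk s σ τ * volume ({y : Ee n | σ < φ y} ∩ {y : Ee n | ψ y ≤ τ}) := by
  have hpt : ∀ y, ENNReal.ofReal (max (φ y - ψ y) 0 ^ s) =
      ∫⁻ σ in Ioi (0:ℝ), (if σ < φ y then (1:ℝ≥0∞) else 0) * mid s (ψ y) σ :=
    fun y => (outer_int hs.le (φ y) (hψ0 y)).symm
  rw [lintegral_congr hpt]
  have hmeas : Measurable (Function.uncurry fun (y : Ee n) (σ : ℝ) =>
      (if σ < φ y then (1:ℝ≥0∞) else 0) * mid s (ψ y) σ) := by
    have m1 : MeasurableSet {p : Ee n × ℝ | p.2 < φ p.1} :=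
      measurableSet_lt measurable_snd (hφ.comp measurable_fst)
    have m2 : MeasurableSet {p : Ee n × ℝ | ψ p.1 < p.2} :=
      measurableSet_lt (hψ.comp measurable_fst) measurable_snd
    have mb : Measurable fun p : Ee n × ℝ =>
        ENNReal.ofReal (s * (p.2 - ψ p.1) ^ (s - 1)) := by
      have : Measurable fun p : Ee n × ℝ => p.2 - ψ p.1 :=
        measurable_snd.sub (hψ.comp measurable_fst)
      measurability
    exact ((Measurable.ite m1 measurable_const measurable_const).mul
      (Measurable.ite m2 mb measurable_const))
  rw [lintegral_lintegral_swap hmeas.aemeasurable]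
  apply lintegral_congr
  intro σ
  have hpt2 : ∀ y : Ee n, (if σ < φ y then (1:ℝ≥0∞) else 0) * mid s (ψ y) σ =
      ∫⁻ τ in Ioi (0:ℝ), (if σ < φ y then (1:ℝ≥0∞) else 0) *
        ((if ψ y ≤ τ then (1:ℝ≥0∞) else 0) * kk s σ τ) := by
    intro y
    rw [lintegral_const_mul' _ _ ind_ne_top, inner_int hs σ (hψ0 y)]
  rw [lintegral_congr hpt2]
  have hmeas2 : Measurable (Function.uncurry fun (y : Ee n) (τ : ℝ) =>
      (if σ < φ y then (1:ℝ≥0∞) else 0) *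
        ((if ψ y ≤ τ then (1:ℝ≥0∞) else 0) * kk s σ τ)) := by
    have m1 : MeasurableSet {p : Ee n × ℝ | σ < φ p.1} :=
      (measurableSet_lt measurable_const hφ).preimage measurable_fst
    have m2 : MeasurableSet {p : Ee n × ℝ | ψ p.1 ≤ p.2} :=
      measurableSet_le (hψ.comp measurable_fst) measurable_snd
    have mk : Measurable fun p : Ee n × ℝ => kk s σ p.2 := by
      apply Measurable.comp (g := kk s σ) ?_ measurable_snd
      unfold kk
      have m3 : MeasurableSet {τ : ℝ | τ < σ} := measurableSet_Iio
      have mb : Measurable fun τ : ℝ =>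
          ENNReal.ofReal (s * (s - 1) * (σ - τ) ^ (s - 2)) := by
        have : Measurable fun τ : ℝ => σ - τ := measurable_const.sub measurable_id
        measurability
      exact Measurable.ite m3 mb measurable_const
    exact (Measurable.ite m1 measurable_const measurable_const).mul
      ((Measurable.ite m2 measurable_const measurable_const).mul mk)
  rw [lintegral_lintegral_swap hmeas2.aemeasurable]
  apply lintegral_congr
  intro τ
  have hpt3 : ∀ y : Ee n, (if σ < φ y then (1:ℝ≥0∞) else 0) *
      ((if ψ y ≤ τ then (1:ℝ≥0∞) else 0) * kk s σ τ) =
      ({y : Ee n | σ < φ y} ∩ {y : Ee n | ψ y ≤ τ}).indicator (fun _ => kk s σ τ) y := by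
    intro y
    by_cases h1 : σ < φ y <;> by_cases h2 : ψ y ≤ τ <;>
      simp [Set.indicator_apply, h1, h2]
  rw [lintegral_congr hpt3, lintegral_indicator_const
    ((measurableSet_lt measurable_const hφ).inter (measurableSet_le hψ measurable_const))]


theorem ofReal_max_zero (x : ℝ) : ENNReal.ofReal (max x 0) = ENNReal.ofReal x := by
  rcases le_total x 0 with h | h
  · rw [max_eq_right h, ENNReal.ofReal_zero, eq_comm, ENNReal.ofReal_eq_zero]
    exact h
  · rw [max_eq_left h]

theorem plus_le (hn : 1 ≤ n) {s : ℝ} (hs : 1 ≤ s) {f g : Ee n → ℝ}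
    (hf : Measurable f) (hg : Measurable g) (hg0 : ∀ y, 0 ≤ g y)
    (hffin : ∀ c : ℝ, 0 < c → dd f c < ⊤) (hgfin : ∀ c : ℝ, 0 < c → dd g c < ⊤) :
    ∫⁻ y, ENNReal.ofReal (max (sF f y - sF g y) 0 ^ s) ≤
      ∫⁻ y, ENNReal.ofReal (max (f y - g y) 0 ^ s) := by
  have hFm : Measurable (sF f) := measurable_sF hn hf hffin
  have hGm : Measurable (sF g) := measurable_sF hn hg hgfin
  rcases eq_or_lt_of_le hs with rfl | hs1
  · simp only [Real.rpow_one]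
    calc ∫⁻ y, ENNReal.ofReal (max (sF f y - sF g y) 0)
        = ∫⁻ y, ENNReal.ofReal (sF f y - sF g y) := lintegral_congr fun y => ofReal_max_zero _
      _ = ∫⁻ σ in Ioi (0:ℝ),
            volume ({y : Ee n | σ < sF f y} ∩ {y : Ee n | sF g y < σ}) :=
          rep_one hFm hGm (sF_nonneg g)
      _ ≤ ∫⁻ σ in Ioi (0:ℝ),
            volume ({y : Ee n | σ < sF f y} ∩ {y : Ee n | sF g y ≤ σ}) :=
          lintegral_mono fun σ => measure_mono
            (inter_subset_inter_right _ fun y (hy : sF g y < σ) => (le_of_lt hy : sF g y ≤ σ))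
      _ ≤ ∫⁻ σ in Ioi (0:ℝ),
            volume ({y : Ee n | σ < f y} ∩ {y : Ee n | g y ≤ σ}) := by
          apply lintegral_mono_ae
          filter_upwards [self_mem_ae_restrict measurableSet_Ioi] with σ hσ
          exact vol_inter_le hn hf hg hffin hgfin hσ hσ
      _ = ∫⁻ σ in Ioi (0:ℝ),
            volume ({y : Ee n | σ < f y} ∩ {y : Ee n | g y < σ}) := by
          apply lintegral_congr_ae
          have h1 := meas_le_ae_eq_meas_lt (volume : Measure (Ee n)) (volume : Measure ℝ) g
          filter_upwards [ae_restrict_of_ae h1, self_mem_ae_restrict measurableSet_Ioi]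
            with σ hσeq hσ
          have hlevel : volume {a : Ee n | g a = σ} = 0 := by
            have hdiff : {a : Ee n | σ ≤ g a} \ {a : Ee n | σ < g a} = {a : Ee n | g a = σ} := by
              ext a
              simp only [mem_diff, mem_setOf_eq, not_lt]
              constructor
              · rintro ⟨h1', h2'⟩; exact le_antisymm h2' h1'
              · rintro rfl; exact ⟨le_refl _, le_refl _⟩
            have hsub2 : {a : Ee n | σ < g a} ⊆ {a : Ee n | σ ≤ g a} :=
              fun a (ha : σ < g a) => (le_of_lt ha : σ ≤ g a)
            have hfin2 : volume {a : Ee n | σ < g a} ≠ ⊤ := (hgfin σ hσ).ne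
            rw [← hdiff, measure_diff hsub2
              (measurableSet_lt measurable_const hg).nullMeasurableSet hfin2, hσeq, tsub_self]
          apply measure_congr
          rw [MeasureTheory.ae_eq_set]
          constructor
          · refine measure_mono_null (fun a ha => ?_) hlevel
            rw [mem_diff] at ha
            simp only [mem_inter_iff, mem_setOf_eq, not_and, not_lt] at ha ⊢
            exact le_antisymm ha.1.2 (ha.2 ha.1.1)
          · refine measure_mono_null (fun a ha => ?_) hlevel
            rw [mem_diff] at ha
            exact absurd ⟨ha.1.1, (le_of_lt (ha.1.2 : g a < σ) : g a ≤ σ)⟩ ha.2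
      _ = ∫⁻ y, ENNReal.ofReal (f y - g y) := (rep_one hf hg hg0).symm
      _ = ∫⁻ y, ENNReal.ofReal (max (f y - g y) 0) :=
          lintegral_congr fun y => (ofReal_max_zero _).symm
  · rw [rep_s hs1 hFm hGm (sF_nonneg g), rep_s hs1 hf hg hg0]
    apply lintegral_mono_ae
    filter_upwards [self_mem_ae_restrict measurableSet_Ioi] with σ hσ
    apply lintegral_mono_ae
    filter_upwards [self_mem_ae_restrict measurableSet_Ioi] with τ hτ
    exact mul_le_mul_right (vol_inter_le hn hf hg hffin hgfin hσ hτ) _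

theorem slice_le (hn : 1 ≤ n) {s : ℝ} (hs : 1 ≤ s) {f g : Ee n → ℝ}
    (hf : Measurable f) (hg : Measurable g) (hf0 : ∀ y, 0 ≤ f y) (hg0 : ∀ y, 0 ≤ g y)
    (hffin : ∀ c : ℝ, 0 < c → dd f c < ⊤) (hgfin : ∀ c : ℝ, 0 < c → dd g c < ⊤) :
    ∫⁻ y, ENNReal.ofReal (|sF f y - sF g y| ^ s) ≤
      ∫⁻ y, ENNReal.ofReal (|f y - g y| ^ s) := by
  have hsne : s ≠ 0 := by linarith
  have habs : ∀ a b : ℝ, ENNReal.ofReal (|a - b| ^ s) =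
      ENNReal.ofReal (max (a - b) 0 ^ s) + ENNReal.ofReal (max (b - a) 0 ^ s) := by
    intro a b
    rcases le_total a b with h | h
    · rw [abs_sub_comm, abs_of_nonneg (by linarith), max_eq_right (by linarith : a - b ≤ 0),
        max_eq_left (by linarith : (0:ℝ) ≤ b - a), Real.zero_rpow hsne, ENNReal.ofReal_zero,
        zero_add]
    · rw [abs_of_nonneg (by linarith), max_eq_left (by linarith : (0:ℝ) ≤ a - b),
        max_eq_right (by linarith : b - a ≤ 0), Real.zero_rpow hsne, ENNReal.ofReal_zero,
        add_zero]
  have hrs : Measurable fun x : ℝ => x ^ s := by measurability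
  have hFm : Measurable (sF f) := measurable_sF hn hf hffin
  have hGm : Measurable (sF g) := measurable_sF hn hg hgfin
  have hm1 : Measurable fun y : Ee n => ENNReal.ofReal (max (sF f y - sF g y) 0 ^ s) :=
    (hrs.comp ((hFm.sub hGm).max measurable_const)).ennreal_ofReal
  have hm2 : Measurable fun y : Ee n => ENNReal.ofReal (max (f y - g y) 0 ^ s) :=
    (hrs.comp ((hf.sub hg).max measurable_const)).ennreal_ofReal
  calc ∫⁻ y, ENNReal.ofReal (|sF f y - sF g y| ^ s)
      = ∫⁻ y, (ENNReal.ofReal (max (sF f y - sF g y) 0 ^ s) +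
          ENNReal.ofReal (max (sF g y - sF f y) 0 ^ s)) := lintegral_congr fun y => habs _ _
    _ = (∫⁻ y, ENNReal.ofReal (max (sF f y - sF g y) 0 ^ s)) +
          ∫⁻ y, ENNReal.ofReal (max (sF g y - sF f y) 0 ^ s) := lintegral_add_left hm1 _
    _ ≤ (∫⁻ y, ENNReal.ofReal (max (f y - g y) 0 ^ s)) +
          ∫⁻ y, ENNReal.ofReal (max (g y - f y) 0 ^ s) :=
        add_le_add (plus_le hn hs hf hg hg0 hffin hgfin) (plus_le hn hs hg hf hf0 hgfin hffin)
    _ = ∫⁻ y, (ENNReal.ofReal (max (f y - g y) 0 ^ s) +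
          ENNReal.ofReal (max (g y - f y) 0 ^ s)) := (lintegral_add_left hm2 _).symm
    _ = ∫⁻ y, ENNReal.ofReal (|f y - g y| ^ s) :=
        lintegral_congr fun y => (habs _ _).symm


theorem steiner_eq_sF {M : Type*} {n : ℕ} (u : M × Ee n → ℝ) (z : M × Ee n) :
    steiner u z = sF (fun y' => u (z.1, y')) z.2 := rfl

open Classical in
theorem measurable_tilde {M : Type*} [MeasurableSpace M] {n : ℕ} (hn : 1 ≤ n)
    {u : M × Ee n → ℝ} (hu : Measurable u)
    (hufin : ∀ (x : M) (c : ℝ), 0 < c → volume {y : Ee n | c < u (x, y)} < ⊤) :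
    Measurable fun z : M × Ee n => if z.2 = (0 : Ee n) then 0 else steiner u z := by
  classical
  set Ut : M × Ee n → ℝ := fun z => if z.2 = (0 : Ee n) then 0 else steiner u z with hUt
  have hUt0 : ∀ z, 0 ≤ Ut z := by
    intro z
    rw [hUt]
    dsimp only
    split
    · exact le_refl 0
    · rw [steiner_eq_sF]
      exact sF_nonneg _ _
  have hpos : ∀ c : ℝ, 0 < c → MeasurableSet {z : M × Ee n | c < Ut z} := by
    intro c hc
    have hset : {z : M × Ee n | c < Ut z} = {z : M × Ee n | z.2 ≠ 0} ∩
        {z : M × Ee n | volume (ball (0 : Ee n) ‖z.2‖) <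
          volume {y' : Ee n | c < u (z.1, y')}} := by
      ext z
      simp only [mem_inter_iff, mem_setOf_eq]
      by_cases hz : z.2 = (0 : Ee n)
      · simp only [hUt, hz, if_pos, ne_eq, not_true_eq_false, false_and, iff_false, not_lt]
        simpa using hc.le
      · simp only [hUt, if_neg hz, ne_eq, hz, not_false_eq_true, true_and]
        rw [steiner_eq_sF]
        exact lt_sF_iff (hu.comp measurable_prodMk_left) (fun c' hc' => hufin z.1 c' hc') hz hc
    rw [hset]
    refine MeasurableSet.inter ?_ ?_
    · exact (measurable_snd (measurableSet_singleton (0 : Ee n))).compl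
    · exact measurableSet_lt (measurable_vb.comp measurable_snd)
        ((measurable_measure_prodMk_left (measurableSet_lt measurable_const hu)).comp
          measurable_fst)
  apply measurable_of_Ioi
  intro c
  rcases lt_or_ge c 0 with hc | hc
  · have : Ut ⁻¹' Ioi c = univ := by
      ext z
      simp only [mem_preimage, mem_Ioi, mem_univ, iff_true]
      exact lt_of_lt_of_le hc (hUt0 z)
    rw [this]; exact MeasurableSet.univ
  · have : Ut ⁻¹' Ioi c = ⋃ q : {q : ℚ // c < (q:ℝ)}, {z : M × Ee n | ((q:ℚ):ℝ) < Ut z} := by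
      ext z
      simp only [mem_preimage, mem_Ioi, mem_iUnion, mem_setOf_eq]
      constructor
      · intro h
        obtain ⟨q, hq1, hq2⟩ := exists_rat_btwn h
        exact ⟨⟨q, hq1⟩, hq2⟩
      · rintro ⟨⟨q, hq⟩, h⟩
        exact lt_trans hq h
    rw [this]
    exact MeasurableSet.iUnion fun q => hpos _ (lt_of_le_of_lt hc q.2)

end SteinerAux

/-- Steiner symmetrization is non-expansive in every `L^s` norm. -/
theorem stmt_7 {M : Type*} [MeasurableSpace M] (μ : Measure M) [SigmaFinite μ]
    {n : ℕ} (hn : 1 ≤ n) (s : ℝ) (hs : 1 ≤ s)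
    (u v : M × EuclideanSpace ℝ (Fin n) → ℝ)
    (hu : Measurable u) (hu0 : ∀ z, 0 ≤ u z)
    (hv : Measurable v) (hv0 : ∀ z, 0 ≤ v z)
    (hufin : ∀ (x : M) (c : ℝ), 0 < c → volume {y | c < u (x, y)} < ⊤)
    (hvfin : ∀ (x : M) (c : ℝ), 0 < c → volume {y | c < v (x, y)} < ⊤) :
    ∫⁻ z, ENNReal.ofReal (|steiner u z - steiner v z| ^ s) ∂(μ.prod volume) ≤
      ∫⁻ z, ENNReal.ofReal (|u z - v z| ^ s) ∂(μ.prod volume) := by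
  classical
  set Ut : M × SteinerAux.Ee n → ℝ :=
    fun z => if z.2 = (0 : SteinerAux.Ee n) then 0 else steiner u z with hUtdef
  set Vt : M × SteinerAux.Ee n → ℝ :=
    fun z => if z.2 = (0 : SteinerAux.Ee n) then 0 else steiner v z with hVtdef
  have hUtm : Measurable Ut := SteinerAux.measurable_tilde hn hu hufin
  have hVtm : Measurable Vt := SteinerAux.measurable_tilde hn hv hvfin
  have hrs : Measurable fun x : ℝ => x ^ s := by measurability
  have hFm : Measurable fun z => ENNReal.ofReal (|Ut z - Vt z| ^ s) :=
    (hrs.comp (hUtm.sub hVtm).abs).ennreal_ofReal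
  have hGm : Measurable fun z : M × SteinerAux.Ee n =>
      ENNReal.ofReal (|u z - v z| ^ s) :=
    (hrs.comp (hu.sub hv).abs).ennreal_ofReal
  have h0ae : ∀ᵐ y : SteinerAux.Ee n ∂volume, y ≠ 0 := by
    rw [MeasureTheory.ae_iff]
    refine measure_mono_null (fun y hy => ?_) (SteinerAux.noatoms hn)
    simpa using hy
  have hnull : (μ.prod volume) (univ ×ˢ {(0 : SteinerAux.Ee n)}) = 0 := by
    rw [Measure.prod_prod, SteinerAux.noatoms hn, mul_zero]
  have haeUt : Ut =ᵐ[μ.prod volume] steiner u := by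
    rw [Filter.EventuallyEq, MeasureTheory.ae_iff]
    refine measure_mono_null (fun z hz => ?_) hnull
    have hz2 : z.2 = (0 : SteinerAux.Ee n) := by
      by_contra hz2
      exact (hz : ¬ _) (by simp only [hUtdef, if_neg hz2])
    exact ⟨mem_univ _, hz2⟩
  have haeVt : Vt =ᵐ[μ.prod volume] steiner v := by
    rw [Filter.EventuallyEq, MeasureTheory.ae_iff]
    refine measure_mono_null (fun z hz => ?_) hnull
    have hz2 : z.2 = (0 : SteinerAux.Ee n) := by
      by_contra hz2
      exact (hz : ¬ _) (by simp only [hVtdef, if_neg hz2])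
    exact ⟨mem_univ _, hz2⟩
  calc ∫⁻ z, ENNReal.ofReal (|steiner u z - steiner v z| ^ s) ∂(μ.prod volume)
      = ∫⁻ z, ENNReal.ofReal (|Ut z - Vt z| ^ s) ∂(μ.prod volume) := by
        apply lintegral_congr_ae
        filter_upwards [haeUt, haeVt] with z h1 h2
        rw [h1, h2]
    _ = ∫⁻ x, ∫⁻ y, ENNReal.ofReal (|Ut (x, y) - Vt (x, y)| ^ s) ∂volume ∂μ :=
        lintegral_prod _ hFm.aemeasurable
    _ ≤ ∫⁻ x, ∫⁻ y, ENNReal.ofReal (|u (x, y) - v (x, y)| ^ s) ∂volume ∂μ := by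
        apply lintegral_mono
        intro x
        dsimp only
        have hstep : ∫⁻ y, ENNReal.ofReal (|Ut (x, y) - Vt (x, y)| ^ s) ∂volume =
            ∫⁻ y, ENNReal.ofReal (|SteinerAux.sF (fun y' => u (x, y')) y -
              SteinerAux.sF (fun y' => v (x, y')) y| ^ s) ∂volume := by
          apply lintegral_congr_ae
          filter_upwards [h0ae] with y hy
          simp only [hUtdef, hVtdef, if_neg hy]
          rw [SteinerAux.steiner_eq_sF, SteinerAux.steiner_eq_sF]
        rw [hstep]
        exact SteinerAux.slice_le hn hs (hu.comp measurable_prodMk_left)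
          (hv.comp measurable_prodMk_left) (fun y => hu0 (x, y)) (fun y => hv0 (x, y))
          (fun c hc => hufin x c hc) (fun c hc => hvfin x c hc)
    _ = ∫⁻ z, ENNReal.ofReal (|u z - v z| ^ s) ∂(μ.prod volume) :=
        (lintegral_prod _ hGm.aemeasurable).symm



end
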